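/- Let P be a poset and let x, y be elements with x < y. If x_0, x_1, ..., x_n is an induced path in the incomparability graph of P with x_0 = x and x_n = y, then x_i < x_j in P for all indices i, j with j - i ≥ 2. -/

import Mathlib

/-- The incomparability graph of a poset: edges are pairs of incomparable elements. -/
def incompGraph (V : Type*) [PartialOrder V] : SimpleGraph V where
  Adj a b := ¬ a ≤ b ∧ ¬ b ≤ a
  symm := by constructor; intro a b h; exact ⟨h.2, h.1⟩
  loopless := by constructor; intro a h; exact h.1 le_rfl

lemma stmt0_aux {V : Type*} [PartialOrder V] (n : ℕ) (x : Fin (n + 1) → V)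
    (hinj : Function.Injective x)
    (hadj : ∀ i j : Fin (n + 1),
      (¬ x i ≤ x j ∧ ¬ x j ≤ x i) ↔ ((i : ℕ) + 1 = j ∨ (j : ℕ) + 1 = i))
    (hn : 2 ≤ n)
    (hbase : x ⟨0, by omega⟩ < x ⟨2, by omega⟩) :
    ∀ i j : Fin (n + 1), (i : ℕ) + 2 ≤ (j : ℕ) → x i < x j := by
  -- comparability at distance ≥ 2
  have comp : ∀ (i j : ℕ) (hi : i < n + 1) (hj : j < n + 1), i + 2 ≤ j →
      x ⟨i, hi⟩ < x ⟨j, hj⟩ ∨ x ⟨j, hj⟩ < x ⟨i, hi⟩ := by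
    intro i j hi hj hij
    have hne : x ⟨i, hi⟩ ≠ x ⟨j, hj⟩ := by
      intro h
      have := hinj h
      simp only [Fin.mk.injEq] at this
      omega
    have hnadj : ¬ (¬ x ⟨i, hi⟩ ≤ x ⟨j, hj⟩ ∧ ¬ x ⟨j, hj⟩ ≤ x ⟨i, hi⟩) := by
      intro hc
      have := (hadj ⟨i, hi⟩ ⟨j, hj⟩).mp hc
      simp only [] at this
      omega
    by_cases h1 : x ⟨i, hi⟩ ≤ x ⟨j, hj⟩
    · exact Or.inl (lt_of_le_of_ne h1 hne)
    · push_neg at hnadj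
      exact Or.inr (lt_of_le_of_ne (hnadj h1) hne.symm)
  -- incomparability of consecutive vertices
  have adjc : ∀ (i : ℕ) (h : i + 1 < n + 1),
      ¬ x ⟨i, Nat.lt_of_succ_lt h⟩ ≤ x ⟨i + 1, h⟩ ∧
      ¬ x ⟨i + 1, h⟩ ≤ x ⟨i, Nat.lt_of_succ_lt h⟩ := by
    intro i h
    exact (hadj ⟨i, Nat.lt_of_succ_lt h⟩ ⟨i + 1, h⟩).mpr (Or.inl rfl)
  -- increasing at distance exactly 2
  have pos2 : ∀ (i : ℕ) (h : i + 2 < n + 1),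
      x ⟨i, by omega⟩ < x ⟨i + 2, h⟩ := by
    intro i
    induction i with
    | zero => intro h; exact hbase
    | succ k ih =>
      intro h
      have hk : x ⟨k, by omega⟩ < x ⟨k + 2, by omega⟩ := ih (by omega)
      rcases comp (k + 1) (k + 3) (by omega) (by omega) (by omega) with h1 | h1
      · exact h1
      · exfalso
        rcases comp k (k + 3) (by omega) (by omega) (by omega) with h2 | h2
        · exact (adjc k (by omega)).1 (h2.trans h1).le
        · exact (adjc (k + 2) (by omega)).2 (h2.trans hk).le
  -- spread to all distances ≥ 2
  have spread : ∀ (j i : ℕ) (hj : j < n + 1) (hi : i < n + 1), i + 2 ≤ j →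
      x ⟨i, hi⟩ < x ⟨j, hj⟩ := by
    intro j
    induction j using Nat.strong_induction_on with
    | _ j ihj =>
      intro i hj hi hij
      rcases eq_or_lt_of_le hij with heq | hlt
      · subst heq
        exact pos2 i hj
      · rcases comp i j hi hj hij with h1 | h1
        · exact h1
        · exfalso
          obtain ⟨m, rfl⟩ : ∃ m, j = m + 2 := ⟨j - 2, by omega⟩
          have hp : x ⟨m, by omega⟩ < x ⟨m + 2, hj⟩ := pos2 m hj
          have hmi : x ⟨m, by omega⟩ < x ⟨i, hi⟩ := hp.trans h1
          rcases eq_or_lt_of_le (show i + 1 ≤ m by omega) with heq2 | hlt2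
          · subst heq2
            exact (adjc i (by omega)).2 hmi.le
          · exact lt_asymm hmi (ihj m (by omega) i (by omega) hi (by omega))
  intro i j hij
  exact spread j i j.isLt i.isLt hij

theorem stmt0 {V : Type*} [PartialOrder V] (n : ℕ) (x : Fin (n + 1) → V)
    (hinj : Function.Injective x)
    (hpath : ∀ i j : Fin (n + 1),
      (incompGraph V).Adj (x i) (x j) ↔ ((i : ℕ) + 1 = j ∨ (j : ℕ) + 1 = i))
    (hxy : x 0 < x (Fin.last n)) :
    ∀ i j : Fin (n + 1), (i : ℕ) + 2 ≤ (j : ℕ) → x i < x j := by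
  intro i j hij
  have hn : 2 ≤ n := by have := j.isLt; omega
  have hadj : ∀ a b : Fin (n + 1),
      (¬ x a ≤ x b ∧ ¬ x b ≤ x a) ↔ ((a : ℕ) + 1 = b ∨ (b : ℕ) + 1 = a) :=
    fun a b => hpath a b
  -- determine the sign of x 0 vs x 2
  have hne : x ⟨0, by omega⟩ ≠ x ⟨2, by omega⟩ := by
    intro h
    have := hinj h
    simp only [Fin.mk.injEq] at this
    omega
  have hcomp : x ⟨0, by omega⟩ < x ⟨2, by omega⟩ ∨ x ⟨2, by omega⟩ < x ⟨0, by omega⟩ := by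
    have hnadj : ¬ (¬ x ⟨0, by omega⟩ ≤ x ⟨2, by omega⟩ ∧
        ¬ x ⟨2, by omega⟩ ≤ x ⟨0, by omega⟩) := by
      intro hc
      have := (hadj ⟨0, by omega⟩ ⟨2, by omega⟩).mp hc
      simp only [] at this
      omega
    by_cases h1 : x ⟨0, by omega⟩ ≤ x ⟨2, by omega⟩
    · exact Or.inl (lt_of_le_of_ne h1 hne)
    · push_neg at hnadj
      exact Or.inr (lt_of_le_of_ne (hnadj h1) hne.symm)
  rcases hcomp with hpos | hneg
  · exact stmt0_aux n x hinj hadj hn hpos i j hij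
  · exfalso
    have hinj' : Function.Injective (OrderDual.toDual ∘ x) :=
      OrderDual.toDual.injective.comp hinj
    have hadj' : ∀ a b : Fin (n + 1),
        (¬ (OrderDual.toDual ∘ x) a ≤ (OrderDual.toDual ∘ x) b ∧
         ¬ (OrderDual.toDual ∘ x) b ≤ (OrderDual.toDual ∘ x) a) ↔
        ((a : ℕ) + 1 = b ∨ (b : ℕ) + 1 = a) :=
      fun a b => Iff.trans and_comm (hadj a b)
    have hbase' : (OrderDual.toDual ∘ x) ⟨0, by omega⟩ < (OrderDual.toDual ∘ x) ⟨2, by omega⟩ :=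
      hneg
    have hdual := stmt0_aux n (OrderDual.toDual ∘ x) hinj' hadj' hn hbase'
      0 (Fin.last n) (by simp [Fin.last]; omega)
    have : x (Fin.last n) < x 0 := hdual
    exact lt_asymm hxy this
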